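/- For any fixed acc : Set Run, the following are equivalent: (i) every r ∈ acc satisfies: for all i, j, X, m, honest r m i and X a T-prefix of ledger r m i imply that for all m' ≥ m + Δ, honest r m' j implies X is a T-prefix of ledger r m' j; (ii) every r ∈ acc satisfies: for all i, X, m, honest r m i and X a T-prefix of ledger r m i imply that for all m' ≥ m + Δ, (E_H^{acc} TP_X) (r, m') holds; (iii) every r ∈ acc satisfies: for all i, X, m, honest r m i and X a T-prefix of ledger r m i imply (C^{acc} TP_X) (r, m). -/
import Mathlib


/-- `X` is a `T`-prefix of `L`: `X` is a prefix of `L` and `X.length + T ≤ L.length`. -/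
def TPrefix {Tx : Type*} (T : ℕ) (X L : List Tx) : Prop :=
  X <+: L ∧ X.length + T ≤ L.length

/-- The run `r` of a system is `T`-`Δ`-acceptable. -/
def Acceptable {Run Agent Tx : Type*} (T Δ : ℕ) (honest : Run → ℕ → Agent → Prop)
    (ledger : Run → ℕ → Agent → List Tx) (r : Run) : Prop :=
  ∀ (m m' : ℕ) (i j : Agent) (X : List Tx), m ≤ m' → honest r m i →
    TPrefix T X (ledger r m i) → honest r (m' + Δ) j →
    TPrefix T X (ledger r (m' + Δ) j)

/-- `q ∼_i p`: agent `i` cannot distinguish the points `q` and `p`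
(`i`'s local state is the same at both points, and `i` is present at both). -/
def Sim {Run Agent σ : Type*} (localState : Run → ℕ → Agent → Option σ)
    (i : Agent) (q p : Run × ℕ) : Prop :=
  localState p.1 p.2 i = localState q.1 q.2 i ∧ (localState p.1 p.2 i).isSome

/-- The agent-relative formula `TP_X`: "`X` is a `T`-prefix of my ledger". -/
def TP {Run Agent Tx : Type*} (T : ℕ) (ledger : Run → ℕ → Agent → List Tx)
    (X : List Tx) (p : Run × ℕ) (i : Agent) : Prop :=
  TPrefix T X (ledger p.1 p.2 i)

/-- The `acc`-guarded operator `E_H^{acc}`: `(E_H^{acc} φ) (r,m)` iff for every agent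
`j` honest at `(r,m)` and every point `(r',m') ∼_j (r,m)` with `j` honest there and
`r' ∈ acc`, `φ (r',m') j` holds. -/
def EHacc {Run Agent σ : Type*} (honest : Run → ℕ → Agent → Prop)
    (localState : Run → ℕ → Agent → Option σ) (acc : Set Run)
    (φ : Run × ℕ → Agent → Prop) (p : Run × ℕ) : Prop :=
  ∀ j, honest p.1 p.2 j → ∀ q, Sim localState j q p → honest q.1 q.2 j →
    q.1 ∈ acc → φ q j

/-- `(○^Δ□ φ) (r, m)`: `φ` holds at `(r, m')` for all `m' ≥ m + Δ`. -/
def NextBox {Run : Type*} (Δ : ℕ) (φ : Run × ℕ → Prop) (p : Run × ℕ) : Prop :=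
  ∀ m', p.2 + Δ ≤ m' → φ (p.1, m')

/-- `IterAcc Δ honest localState acc n φ` is `(○^Δ□ ∘ E_H^{acc})^{n+1} φ`:
`(○^Δ□ ∘ E_H^{acc})^1 φ = ○^Δ□(E_H^{acc} φ)` and
`(○^Δ□ ∘ E_H^{acc})^{n+1} φ = ○^Δ□(E_H^{acc} ((○^Δ□ ∘ E_H^{acc})^n φ))`. -/
def IterAcc {Run Agent σ : Type*} (Δ : ℕ) (honest : Run → ℕ → Agent → Prop)
    (localState : Run → ℕ → Agent → Option σ) (acc : Set Run) :
    ℕ → (Run × ℕ → Agent → Prop) → (Run × ℕ → Prop)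
  | 0, φ => NextBox Δ (EHacc honest localState acc φ)
  | n + 1, φ => NextBox Δ (EHacc honest localState acc
      (fun q _ => IterAcc Δ honest localState acc n φ q))

/-- `acc`-relative `Δ`-`□`-common knowledge among the honest agents:
`(C^{acc} φ) p := ∀ n ≥ 1, ((○^Δ□ ∘ E_H^{acc})^n φ) p`. -/
def CKacc {Run Agent σ : Type*} (Δ : ℕ) (honest : Run → ℕ → Agent → Prop)
    (localState : Run → ℕ → Agent → Option σ) (acc : Set Run)
    (φ : Run × ℕ → Agent → Prop) (p : Run × ℕ) : Prop :=
  ∀ n : ℕ, IterAcc Δ honest localState acc n φ p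

/-- For a fixed set `acc` of runs, the per-run temporal condition (i), the `E_H^{acc}`
condition (ii), and the `acc`-relative common-knowledge condition (iii) are
equivalent. -/
theorem acc_conditions_tfae {Run Agent Tx σ : Type*} (T Δ : ℕ)
    (honest : Run → ℕ → Agent → Prop) (ledger : Run → ℕ → Agent → List Tx)
    (localState : Run → ℕ → Agent → Option σ)
    (hpresent : ∀ (r : Run) (m : ℕ) (i : Agent), honest r m i → localState r m i ≠ none)
    (hledger : ∀ (i : Agent) (q p : Run × ℕ), Sim localState i q p →
      ledger q.1 q.2 i = ledger p.1 p.2 i)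
    (acc : Set Run) :
    List.TFAE
      [ -- (i)
        (∀ r ∈ acc, ∀ (i j : Agent) (X : List Tx) (m : ℕ),
          honest r m i → TPrefix T X (ledger r m i) →
          ∀ m', m + Δ ≤ m' → honest r m' j → TPrefix T X (ledger r m' j)),
        -- (ii)
        (∀ r ∈ acc, ∀ (i : Agent) (X : List Tx) (m : ℕ),
          honest r m i → TPrefix T X (ledger r m i) →
          ∀ m', m + Δ ≤ m' →
            EHacc honest localState acc (TP T ledger X) (r, m')),
        -- (iii)
        (∀ r ∈ acc, ∀ (i : Agent) (X : List Tx) (m : ℕ),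
          honest r m i → TPrefix T X (ledger r m i) →
            CKacc Δ honest localState acc (TP T ledger X) (r, m)) ] := by

  tfae_have 1 → 2 := by
    intro h1 r hr i X m hi hX m' hm' j hj q hsim hqhon hqacc
    have hl := hledger j q (r, m') hsim
    have := h1 r hr i j X m hi hX m' hm' hj
    unfold TP
    rw [hl]
    exact this
  tfae_have 2 → 3 := by
    intro h2 r hr i X m hi hX n
    induction n generalizing r i X m with
    | zero => exact h2 r hr i X m hi hX
    | succ n ih =>
      intro m' hm' j hj q hsim hqhon hqacc
      have hE := h2 r hr i X m hi hX m' hm' j hj q hsim hqhon hqacc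
      have hl := hledger j q (r, m') hsim
      exact ih q.1 hqacc j X q.2 hqhon hE
  tfae_have 3 → 1 := by
    intro h3 r hr i j X m hi hX m' hm' hj
    have h0 := h3 r hr i X m hi hX 0 m' hm' j hj (r, m')
      ⟨rfl, Option.isSome_iff_ne_none.mpr (hpresent r m' j hj)⟩ hj hr
    exact h0
  tfae_finish
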